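/- Let U1, U2, U3 be subspaces of a finite-dimensional vector space V over a field F. Then the three quantities dim(U1 ⊓ (U2 ⊔ U3)) − dim((U1 ⊓ U2) ⊔ (U1 ⊓ U3)), dim(U2 ⊓ (U1 ⊔ U3)) − dim((U2 ⊓ U1) ⊔ (U2 ⊓ U3)), and dim(U3 ⊓ (U1 ⊔ U2)) − dim((U3 ⊓ U1) ⊔ (U3 ⊓ U2)) are all equal. -/
import Mathlib


open Module

theorem stmt_0 (F V : Type*) [Field F] [AddCommGroup V] [Module F V]
    [FiniteDimensional F V] (U1 U2 U3 : Submodule F V) :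
    (finrank F ↥(U1 ⊓ (U2 ⊔ U3)) : ℤ) - finrank F ↥((U1 ⊓ U2) ⊔ (U1 ⊓ U3))
      = (finrank F ↥(U2 ⊓ (U1 ⊔ U3)) : ℤ) - finrank F ↥((U2 ⊓ U1) ⊔ (U2 ⊓ U3)) ∧
    (finrank F ↥(U2 ⊓ (U1 ⊔ U3)) : ℤ) - finrank F ↥((U2 ⊓ U1) ⊔ (U2 ⊓ U3))
      = (finrank F ↥(U3 ⊓ (U1 ⊔ U2)) : ℤ) - finrank F ↥((U3 ⊓ U1) ⊔ (U3 ⊓ U2)) := by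
  have key : ∀ s t : Submodule F V,
      finrank F ↥(s ⊔ t) + finrank F ↥(s ⊓ t) = finrank F ↥s + finrank F ↥t :=
    fun s t => Submodule.finrank_sup_add_finrank_inf_eq s t
  have e1 : U1 ⊔ (U2 ⊔ U3) = U2 ⊔ (U1 ⊔ U3) := sup_left_comm U1 U2 U3
  have e2 : U2 ⊔ (U1 ⊔ U3) = U3 ⊔ (U1 ⊔ U2) := by
    ac_rfl
  have f1 : (U1 ⊓ U2) ⊓ (U1 ⊓ U3) = U1 ⊓ (U2 ⊓ U3) := (inf_inf_distrib_left U1 U2 U3).symm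
  have f2 : (U2 ⊓ U1) ⊓ (U2 ⊓ U3) = U1 ⊓ (U2 ⊓ U3) := by
    rw [← inf_inf_distrib_left, inf_left_comm]
  have f3 : (U3 ⊓ U1) ⊓ (U3 ⊓ U2) = U1 ⊓ (U2 ⊓ U3) := by
    rw [← inf_inf_distrib_left, inf_left_comm, inf_comm U3 U2]
  have h1 := key U1 (U2 ⊔ U3)
  have h2 := key U2 (U1 ⊔ U3)
  have h3 := key U3 (U1 ⊔ U2)
  have g1 := key (U1 ⊓ U2) (U1 ⊓ U3)
  have g2 := key (U2 ⊓ U1) (U2 ⊓ U3)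
  have g3 := key (U3 ⊓ U1) (U3 ⊓ U2)
  have p1 := key U2 U3
  have p2 := key U1 U3
  have p3 := key U1 U2
  rw [e1, e2] at h1
  rw [e2] at h2
  rw [f1] at g1
  rw [f2] at g2
  rw [f3] at g3
  rw [inf_comm U2 U1] at g2 ⊢
  rw [inf_comm U3 U1, inf_comm U3 U2] at g3 ⊢
  omega
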